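/- Fix 0<k<ω and let T be a complete first-order theory. If T is PM^(k+1), i.e. some partitioned formula φ(x;y) is PM^(k+1) in T, then T has IP_k, i.e. some partitioned formula has the k-independence property in T. -/

import Mathlib

open FirstOrder Language Set

universe u v w

/-- A partitioned formula `φ(x;y)` (object variables `α`, parameter variables `β`)
exhibits the pattern `(C, I)` (indexed by `S`) in the theory `T`. -/
def ExhibitsPattern {L : FirstOrder.Language.{u, v}} (T : L.Theory) {α β S : Type*}
    (φ : L.Formula (α ⊕ β)) (C I : Set (Set S × Set S)) : Prop :=
  ∃ (M : Theory.ModelType.{u, v, w} T) (b : S → β → M),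
    (∀ p ∈ C, ∃ a : α → M,
      (∀ i ∈ p.1, φ.Realize (Sum.elim a (b i))) ∧
      (∀ j ∈ p.2, ¬ φ.Realize (Sum.elim a (b j)))) ∧
    (∀ p ∈ I, ¬ ∃ a : α → M,
      (∀ i ∈ p.1, φ.Realize (Sum.elim a (b i))) ∧
      (∀ j ∈ p.2, ¬ φ.Realize (Sum.elim a (b j))))

/-- `(C, I)` is a pattern: the condition `(∅, ∅)` is excluded. -/
def IsPattern {S : Type*} (C I : Set (Set S × Set S)) : Prop :=
  (∅, ∅) ∉ C ∧ (∅, ∅) ∉ I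

/-- A pattern is exhibitable if some partitioned formula of some complete
first-order theory exhibits it. -/
def Exhibitable {S : Type*} (C I : Set (Set S × Set S)) : Prop :=
  ∃ (L : FirstOrder.Language.{0, 0}) (T : L.Theory) (_ : T.IsComplete) (α β : Type)
    (φ : L.Formula (α ⊕ β)), ExhibitsPattern.{0, 0, 0} T φ C I

/-- `(C, I)` is a positive pattern: every condition has the form `(X, ∅)` with `X` nonempty. -/
def IsPositivePattern {S : Type*} (C I : Set (Set S × Set S)) : Prop :=
  ∀ p ∈ C ∪ I, p.1 ≠ (∅ : Set S) ∧ p.2 = (∅ : Set S)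

/-- A positive pattern `(C, I)` is reasonable: no inconsistency condition is contained in a
consistency condition. -/
def IsReasonablePositive {S : Type*} (C I : Set (Set S × Set S)) : Prop :=
  ∀ p ∈ I, ∀ q ∈ C, ¬ p.1 ⊆ q.1

/-- `φ(x;y)` is `PM^(k)` in `T`: it exhibits every reasonable positive pattern all of whose
inconsistency conditions have size `k`. -/
def IsPMk (k : ℕ) {L : FirstOrder.Language.{u, v}} (T : L.Theory) {α β : Type*}
    (φ : L.Formula (α ⊕ β)) : Prop :=
  ∀ (n : ℕ) (C I : Set (Set (Fin n) × Set (Fin n))),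
    IsPositivePattern C I → IsReasonablePositive C I →
    (∀ p ∈ I, p.1.ncard = k) →
      ExhibitsPattern.{u, v, w} T φ C I

/-- A partitioned formula `ψ(x; y₁ … y_k)` (with `k` groups of parameter variables, each a copy
of `β`) has the `k`-independence property in `T`. -/
def HasIPk (k : ℕ) {L : FirstOrder.Language.{u, v}} (T : L.Theory) {α β : Type*}
    (ψ : L.Formula (α ⊕ (Fin k × β))) : Prop :=
  ∃ (M : Theory.ModelType.{u, v, w} T) (a : Fin k → ℕ → β → M)
    (b : Set (Fin k → ℕ) → α → M),
    ∀ (X : Set (Fin k → ℕ)) (i : Fin k → ℕ),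
      ψ.Realize (Sum.elim (b X) (fun p : Fin k × β => a p.1 (i p.1) p.2)) ↔ i ∈ X
private lemma aux_finitize {L : FirstOrder.Language.{u, v}} {α₀ β₀ : Type w}
    (φ : L.Formula (α₀ ⊕ β₀)) :
    ∃ (m : ℕ) (g : Fin m → α₀) (φ₁ : L.Formula (Fin m ⊕ β₀)),
      Function.Injective g ∧
      ∀ (M : Type w) [L.Structure M] (a : α₀ → M) (wv : β₀ → M),
        φ₁.Realize (Sum.elim (a ∘ g) wv) ↔ φ.Realize (Sum.elim a wv) := by
  classical
  set s : Set (α₀ ⊕ β₀) := ↑φ.freeVarFinset ∪ Set.range Sum.inr with hs_def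
  have hsub : ↑φ.freeVarFinset ⊆ s := Set.subset_union_left
  set t : Finset α₀ := φ.freeVarFinset.preimage Sum.inl Sum.inl_injective.injOn with ht_def
  have hpf : ∀ a : α₀, Sum.inl a ∈ s → a ∈ t := by
    intro a ha
    rcases ha with ha | ⟨b, hb⟩
    · exact Finset.mem_preimage.2 ha
    · simp at hb
  let e : s → (Fin t.card ⊕ β₀) := fun x =>
    Sum.rec (motive := fun y => y ∈ s → (Fin t.card ⊕ β₀))
      (fun a ha => Sum.inl (t.equivFin ⟨a, hpf a ha⟩))
      (fun b _ => Sum.inr b) x.1 x.2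
  refine ⟨t.card, fun j => ((t.equivFin.symm j : t) : α₀),
    Formula.relabel e (φ.restrictFreeVar (Set.inclusion hsub)), ?_, ?_⟩
  · intro j j' hjj
    exact t.equivFin.symm.injective (Subtype.coe_injective hjj)
  · intro M instM a wv
    have hcomp : (Sum.elim (a ∘ fun j => ((t.equivFin.symm j : t) : α₀)) wv) ∘ e
        = (Sum.elim a wv) ∘ (Subtype.val) := by
      funext x
      obtain ⟨y, hy⟩ := x
      cases y with
      | inl aa =>
        show a ((t.equivFin.symm (t.equivFin ⟨aa, hpf aa hy⟩) : t) : α₀) = a aa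
        rw [Equiv.symm_apply_apply]
      | inr b => rfl
    rw [Formula.realize_relabel, hcomp]
    exact BoundedFormula.realize_restrictFreeVar' hsub
private lemma aux_psi {L : FirstOrder.Language.{u, v}} {β₀ : Type w} (k m : ℕ)
    (φ₁ : L.Formula (Fin m ⊕ β₀)) :
    ∃ ψ : L.Formula (β₀ ⊕ (Fin k × β₀)),
      ∀ (M : Type w) [L.Structure M] (d : β₀ → M) (ca : Fin k × β₀ → M),
        ψ.Realize (Sum.elim d ca) ↔
          ∃ u : Fin m → M, φ₁.Realize (Sum.elim u d) ∧
            ∀ j : Fin k, φ₁.Realize (Sum.elim u fun v => ca (j, v)) := by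
  classical
  let χ : L.Formula (Fin m ⊕ (β₀ ⊕ (Fin k × β₀))) :=
    (Formula.relabel (Sum.map id Sum.inl) φ₁) ⊓
      BoundedFormula.iInf
        (fun j : Fin k => Formula.relabel (Sum.map id fun v => Sum.inr (j, v)) φ₁)
  refine ⟨(χ.relabel Sum.swap).iExs (Fin m), ?_⟩
  intro M instM d ca
  rw [Formula.realize_iExs]
  apply exists_congr; intro u
  have hv : (fun a : Fin m ⊕ (β₀ ⊕ (Fin k × β₀)) =>
      Sum.elim (Sum.elim d ca) u (Sum.swap a)) = Sum.elim u (Sum.elim d ca) := by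
    funext a; cases a <;> rfl
  rw [Formula.realize_relabel, Function.comp_def, hv]
  have h1 : χ.Realize (Sum.elim u (Sum.elim d ca)) ↔
      (Formula.relabel (Sum.map id Sum.inl) φ₁).Realize (Sum.elim u (Sum.elim d ca)) ∧
      ∀ j ∈ (Finset.univ : Finset (Fin k)),
        (Formula.relabel (Sum.map id fun v => Sum.inr (j, v)) φ₁).Realize
          (Sum.elim u (Sum.elim d ca)) := by
    show BoundedFormula.Realize _ _ _ ↔ _
    rw [BoundedFormula.realize_inf, BoundedFormula.realize_iInf]
    exact and_congr Iff.rfl ⟨fun h j _ => h j, fun h j => h j (Finset.mem_univ j)⟩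
  rw [h1]
  simp only [Finset.mem_univ, forall_true_left, Formula.realize_relabel]
  constructor
  · rintro ⟨ha, hb⟩
    refine ⟨?_, fun j => ?_⟩
    · convert ha using 2; funext z; cases z <;> rfl
    · convert hb j using 2; funext z; cases z <;> rfl
  · rintro ⟨ha, hb⟩
    refine ⟨?_, fun j => ?_⟩
    · convert ha using 2; funext z; cases z <;> rfl
    · convert hb j using 2; funext z; cases z <;> rfl
private lemma aux_grid
    {L : FirstOrder.Language.{u, v}} {T : L.Theory}
    {α₀ β₀ : Type w} {φ : L.Formula (α₀ ⊕ β₀)}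
    {k m : ℕ} {g : Fin m → α₀} {φ₁ : L.Formula (Fin m ⊕ β₀)}
    {ψ : L.Formula (β₀ ⊕ (Fin k × β₀))}
    (hPM : IsPMk.{u, v, w} (k + 1) T φ)
    (hg : Function.Injective g)
    (hφ₁ : ∀ (M : Type w) [L.Structure M] (a : α₀ → M) (wv : β₀ → M),
        φ₁.Realize (Sum.elim (a ∘ g) wv) ↔ φ.Realize (Sum.elim a wv))
    (hψ : ∀ (M : Type w) [L.Structure M] (d : β₀ → M) (ca : Fin k × β₀ → M),
        ψ.Realize (Sum.elim d ca) ↔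
          ∃ u : Fin m → M, φ₁.Realize (Sum.elim u d) ∧
            ∀ j : Fin k, φ₁.Realize (Sum.elim u fun v => ca (j, v)))
    (N : ℕ) :
    ∃ (M : Theory.ModelType.{u, v, w} T) (c : Fin k × Fin N → β₀ → M)
      (d : Set (Fin k → Fin N) → β₀ → M),
      ∀ (X : Set (Fin k → Fin N)) (i : Fin k → Fin N),
        ψ.Realize (Sum.elim (d X) fun p : Fin k × β₀ => c (p.1, i p.1) p.2) ↔ i ∈ X := by
  classical
  -- the index type of the pattern
  let S := (Fin k × Fin N) ⊕ Set (Fin k → Fin N)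
  let n : ℕ := Nat.card S
  let e : S ≃ Fin n := Finite.equivFin S
  -- base sets and their images
  let base : Set (Fin k → Fin N) → (Fin k → Fin N) → Set S := fun X i =>
    insert (Sum.inr X) (Set.range fun j : Fin k => Sum.inl (j, i j))
  let Z : Set (Fin k → Fin N) → (Fin k → Fin N) → Set (Fin n) := fun X i => (↑e) '' base X i
  have hbase : ∀ X i X' i', base X i ⊆ base X' i' → X = X' ∧ i = i' := by
    intro X i X' i' hsub
    have h1 : (Sum.inr X : S) ∈ base X' i' := hsub (Set.mem_insert _ _)
    have hX : X = X' := by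
      rcases h1 with h | ⟨j, hj⟩
      · exact (Sum.inr.inj h)
      · exact absurd hj (by simp)
    refine ⟨hX, funext fun j => ?_⟩
    have h2 : (Sum.inl (j, i j) : S) ∈ base X' i' :=
      hsub (Set.mem_insert_of_mem _ ⟨j, rfl⟩)
    rcases h2 with h | ⟨j', hj'⟩
    · exact absurd h (by simp)
    · have := Sum.inl.inj hj'
      have hj : j' = j := congrArg Prod.fst this
      subst hj
      exact (congrArg Prod.snd this).symm
  have hZsub : ∀ X i X' i', Z X i ⊆ Z X' i' → X = X' ∧ i = i' := by
    intro X i X' i' hsub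
    exact hbase X i X' i' ((Set.image_subset_image_iff e.injective).1 hsub)
  have hZcard : ∀ X i, (Z X i).ncard = k + 1 := by
    intro X i
    have hinj : Function.Injective fun j : Fin k => (Sum.inl (j, i j) : S) := by
      intro j j' h
      exact congrArg Prod.fst (Sum.inl.inj h)
    have hnm : (Sum.inr X : S) ∉ Set.range fun j : Fin k => (Sum.inl (j, i j) : S) := by
      rintro ⟨j, hj⟩; exact absurd hj (by simp)
    rw [show Z X i = (↑e) '' base X i from rfl, Set.ncard_image_of_injective _ e.injective]
    rw [show base X i = insert (Sum.inr X) (Set.range fun j : Fin k => (Sum.inl (j, i j) : S))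
      from rfl]
    rw [Set.ncard_insert_of_notMem hnm, ← Set.image_univ,
      Set.ncard_image_of_injective _ hinj, Set.ncard_univ, Nat.card_eq_fintype_card,
      Fintype.card_fin]
  -- the pattern
  let C : Set (Set (Fin n) × Set (Fin n)) :=
    {p | ∃ X i, i ∈ X ∧ p = (Z X i, (∅ : Set (Fin n)))}
  let I : Set (Set (Fin n) × Set (Fin n)) :=
    {p | ∃ X i, i ∉ X ∧ p = (Z X i, (∅ : Set (Fin n)))}
  have hpos : IsPositivePattern C I := by
    rintro p (⟨X, i, _, rfl⟩ | ⟨X, i, _, rfl⟩) <;>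
      exact ⟨Set.nonempty_iff_ne_empty.1 ⟨e (Sum.inr X),
        Set.mem_image_of_mem _ (Set.mem_insert _ _)⟩, rfl⟩
  have hreas : IsReasonablePositive C I := by
    rintro p ⟨X, i, hiX, rfl⟩ q ⟨X', i', hiX', rfl⟩ hsub
    obtain ⟨hX, hi⟩ := hZsub X i X' i' hsub
    subst hX; subst hi
    exact hiX hiX'
  have hsize : ∀ p ∈ I, p.1.ncard = k + 1 := by
    rintro p ⟨X, i, _, rfl⟩
    exact hZcard X i
  obtain ⟨M, bfun, hC, hI⟩ := hPM n C I hpos hreas hsize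
  refine ⟨M, fun s => bfun (e (Sum.inl s)), fun X => bfun (e (Sum.inr X)), ?_⟩
  intro X i
  rw [hψ M (bfun (e (Sum.inr X))) (fun p : Fin k × β₀ => bfun (e (Sum.inl (p.1, i p.1))) p.2)]
  constructor
  · rintro ⟨u, h0, hj⟩
    by_contra hiX
    refine hI (Z X i, ∅) ⟨X, i, hiX, rfl⟩ ?_
    let a : α₀ → M := Function.extend g u fun _ => Classical.arbitrary M
    have hag : a ∘ g = u := by
      funext x
      simp only [Function.comp_apply]
      exact hg.extend_apply u _ x
    refine ⟨a, ?_, by simp⟩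
    rintro idx ⟨y, hy, rfl⟩
    rcases hy with h | ⟨j, hj'⟩
    · subst h
      exact (hφ₁ M a (bfun (e (Sum.inr X)))).1 (by rw [hag]; exact h0)
    · subst hj'
      exact (hφ₁ M a (bfun (e (Sum.inl (j, i j))))).1 (by rw [hag]; exact hj j)
  · intro hiX
    obtain ⟨a, ha, -⟩ := hC (Z X i, ∅) ⟨X, i, hiX, rfl⟩
    refine ⟨a ∘ g, ?_, fun j => ?_⟩
    · exact (hφ₁ M a (bfun (e (Sum.inr X)))).2
        (ha (e (Sum.inr X)) (Set.mem_image_of_mem _ (Set.mem_insert _ _)))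
    · exact (hφ₁ M a (bfun (e (Sum.inl (j, i j))))).2
        (ha (e (Sum.inl (j, i j))) (Set.mem_image_of_mem _ (Set.mem_insert_of_mem _ ⟨j, rfl⟩)))

/-- for `0 < k < ω`, if the complete theory `T` is `PM^(k+1)` (some partitioned
formula is `PM^(k+1)` in `T`), then `T` has `IP_k` (some partitioned formula has the
`k`-independence property in `T`). -/
theorem PMk_succ_implies_IPk
    (k : ℕ) (hk : 0 < k)
    {L : FirstOrder.Language.{u, v}} (T : L.Theory) (hT : T.IsComplete)
    (h : ∃ (α β : Type w) (φ : L.Formula (α ⊕ β)), IsPMk.{u, v, w} (k + 1) T φ) :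
    ∃ (α β : Type w) (ψ : L.Formula (α ⊕ (Fin k × β))), HasIPk.{u, v, w} k T ψ := by
  classical
  obtain ⟨α₀, β₀, φ, hPM⟩ := h
  obtain ⟨m, g, φ₁, hg, hφ₁⟩ := aux_finitize φ
  obtain ⟨ψ, hψ⟩ := aux_psi k m φ₁
  refine ⟨β₀, β₀, ψ, ?_⟩
  -- a model with the finite-grid configuration for every grid size
  have hgrid := fun N : ℕ => aux_grid hPM hg hφ₁ hψ (N + 1)
  choose Ms cs ds hMs using hgrid
  -- the ultraproduct over the hyperfilter
  let U : Ultrafilter ℕ := Filter.hyperfilter ℕ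
  let Mf : ℕ → Type w := fun N => (Ms N : Type w)
  let Mstar : Type w := (U : Filter ℕ).Product Mf
  haveI : Mstar ⊨ T :=
    ⟨fun σ hσ => (Ultraproduct.sentence_realize σ).2
      (Filter.Eventually.of_forall fun N => (Ms N).is_model.realize_of_mem σ hσ)⟩
  -- truncation of natural numbers into finite grids
  let tr : ∀ N : ℕ, ℕ → Fin (N + 1) := fun N t => if h : t < N + 1 then ⟨t, h⟩ else 0
  let XN : Set (Fin k → ℕ) → ∀ N : ℕ, Set (Fin k → Fin (N + 1)) := fun X N =>
    {gg | (fun j => ((gg j : ℕ))) ∈ X}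
  let av : Fin k → ℕ → β₀ → ∀ N, Mf N := fun j t v N => cs N (j, tr N t) v
  let bv : Set (Fin k → ℕ) → β₀ → ∀ N, Mf N := fun X v N => ds N (XN X N) v
  refine ⟨Theory.ModelType.of T Mstar,
    fun j t v => (av j t v : Mstar), fun X v => (bv X v : Mstar), ?_⟩
  intro X i
  let x : (β₀ ⊕ (Fin k × β₀)) → ∀ N, Mf N :=
    Sum.elim (fun v => bv X v) (fun p => av p.1 (i p.1) p.2)
  have hval : (Sum.elim (fun v => (bv X v : Mstar))
      (fun p : Fin k × β₀ => (av p.1 (i p.1) p.2 : Mstar))) = fun r => (x r : Mstar) := by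
    funext r; cases r <;> rfl
  show ψ.Realize (Sum.elim (fun v => (bv X v : Mstar))
      (fun p : Fin k × β₀ => (av p.1 (i p.1) p.2 : Mstar))) ↔ i ∈ X
  rw [hval]
  refine (Ultraproduct.realize_formula_cast ψ x).trans ?_
  have key : ∀ᶠ N in (U : Filter ℕ), ((ψ.Realize fun r => x r N) ↔ i ∈ X) := by
    refine Filter.Eventually.filter_mono Nat.hyperfilter_le_atTop ?_
    rw [Filter.eventually_atTop]
    refine ⟨Finset.univ.sup i, fun N hN => ?_⟩
    have htr : ∀ j : Fin k, ((tr N (i j) : ℕ)) = i j := by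
      intro j
      have hlt : i j < N + 1 :=
        Nat.lt_succ_of_le (le_trans (Finset.le_sup (Finset.mem_univ j)) hN)
      simp [tr, hlt, Nat.lt_succ_iff.mp hlt]
    have h1 : (fun r => x r N) =
        Sum.elim (ds N (XN X N)) (fun p : Fin k × β₀ => cs N (p.1, (fun j => tr N (i j)) p.1) p.2) := by
      funext r; cases r <;> rfl
    rw [h1, hMs N (XN X N) (fun j => tr N (i j))]
    show (fun j => tr N (i j)) ∈ XN X N ↔ i ∈ X
    have : (fun j => ((tr N (i j) : ℕ))) = i := funext htr
    simp only [XN, Set.mem_setOf_eq, this]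
  rw [Filter.eventually_congr key, Filter.eventually_const]
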